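/- Let n = 8 f_m + 1 with m ≥ 1, s a positive integer, and A : {0,...,n} → ℝ with A_i ≥ 0, A_0 = 1, ∑_i A_i = 2^s, satisfying A_1 = ⟨3n - 4x⟩, A_2 = (1/2)⟨(4x - 3n + 1)² - 3n - 1⟩, and ∑_{i even} A_i ≥ 2^{s-1}. Then 2^s > 3n + 5, i.e., s ≥ 2m + 4. -/

import Mathlib

set_option maxHeartbeats 1000000


def f (m : ℕ) : ℕ := (4 ^ m - 1) / 3

theorem lp_bound_8fm_add_one (m : ℕ) (hm : 1 ≤ m) (n : ℕ)
    (hn : n = 8 * f m + 1)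
    (s : ℕ) (hs : 1 ≤ s) (A : ℕ → ℝ)
    (hA0 : A 0 = 1)
    (hApos : ∀ i ≤ n, 0 ≤ A i)
    (hAsum : ∑ i ∈ Finset.range (n + 1), A i = 2 ^ s)
    (hA1 : A 1 = (1 / 2 ^ s) * ∑ i ∈ Finset.range (n + 1), (3 * n - 4 * i : ℝ) * A i)
    (hA2 : A 2 = (1 / 2 ^ s) * ∑ i ∈ Finset.range (n + 1),
      (1 / 2) * ((4 * i - 3 * n + 1 : ℝ) ^ 2 - 3 * n - 1) * A i)
    (hEven : ∑ i ∈ (Finset.range (n + 1)).filter (fun i => Even i), A i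
      ≥ 2 ^ (s - 1)) :
    (2 : ℝ) ^ s > 3 * n + 5 ∧ 2 * m + 4 ≤ s := by
  have h2s0 : (0:ℝ) < 2 ^ s := by positivity
  have hmod : 4 ^ m % 3 = 1 := by rw [Nat.pow_mod]; simp
  have h4m : 4 ≤ 4 ^ m := by
    calc 4 = 4 ^ 1 := (pow_one 4).symm
    _ ≤ 4 ^ m := Nat.pow_le_pow_right (by norm_num) hm
  have hfm : 3 * f m = 4 ^ m - 1 := by unfold f; omega
  have h3n5 : 3 * n + 5 = 8 * 4 ^ m := by omega
  set c : ℕ := 2 * 4 ^ m - 1 with hcdef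
  have hc4 : 4 * c = 3 * n + 1 := by omega
  have hcodd : c % 2 = 1 := by omega
  have hn9 : 9 ≤ n := by omega
  have hn9R : (9:ℝ) ≤ n := by exact_mod_cast hn9
  have hcR : (4:ℝ) * c = 3 * n + 1 := by exact_mod_cast hc4
  have hA1n : 0 ≤ A 1 := hApos 1 (by omega)
  have hA2n : 0 ≤ A 2 := hApos 2 (by omega)
  have e1 : ∑ i ∈ Finset.range (n + 1), (3 * n - 4 * i : ℝ) * A i = 2 ^ s * A 1 := by
    rw [hA1]; field_simp
  have e2 : ∑ i ∈ Finset.range (n + 1),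
      (1 / 2) * ((4 * i - 3 * n + 1 : ℝ) ^ 2 - 3 * n - 1) * A i = 2 ^ s * A 2 := by
    rw [hA2]; field_simp
  have hS : ∑ i ∈ Finset.range (n + 1), ((4 * i : ℝ) - 3 * n - 1) ^ 2 * A i
      = (3 * (n:ℝ) + 1) * (2:ℝ) ^ s + 4 * ((2:ℝ) ^ s * A 1) + 2 * ((2:ℝ) ^ s * A 2) := by
    rw [← e1, ← e2, ← hAsum, Finset.mul_sum, Finset.mul_sum, Finset.mul_sum,
      ← Finset.sum_add_distrib, ← Finset.sum_add_distrib]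
    exact Finset.sum_congr rfl fun i _ => by ring
  have hE : (2:ℝ) ^ (s - 1) ≤ ∑ i ∈ Finset.range (n + 1), (if Even i then A i else 0) := by
    rw [← Finset.sum_filter]; exact hEven
  have hg : ∀ i ∈ Finset.range (n + 1),
      0 ≤ ((4 * i : ℝ) - 3 * n - 1) ^ 2 * A i - 16 * (if Even i then A i else 0) := by
    intro i hi
    have hin : i ≤ n := by
      have := Finset.mem_range.mp hi; omega
    have hAi : 0 ≤ A i := hApos i hin
    by_cases he : Even i
    · simp only [he, if_true]
      have hic : i ≠ c := by
        rw [Nat.even_iff] at he; omega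
      have h1 : (1:ℝ) ≤ ((i : ℝ) - c) ^ 2 := by
        rcases Nat.lt_or_ge i c with h | h
        · have h' : (i:ℝ) + 1 ≤ c := by exact_mod_cast h
          nlinarith
        · have h2 : c < i := lt_of_le_of_ne h fun hh => hic hh.symm
          have h' : (c:ℝ) + 1 ≤ i := by exact_mod_cast h2
          nlinarith
      have h2' : ((4 * i : ℝ) - 3 * n - 1) ^ 2 = 16 * ((i : ℝ) - c) ^ 2 := by
        have h : (4 * i : ℝ) - 3 * n - 1 = 4 * ((i : ℝ) - c) := by linarith [hcR]
        rw [h]; ring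
      nlinarith
    · simp only [he, if_false]
      have : (0:ℝ) ≤ ((4 * i : ℝ) - 3 * n - 1) ^ 2 * A i := by positivity
      linarith
  have hsub : Finset.range 3 ⊆ Finset.range (n + 1) := Finset.range_subset_range.mpr (by omega)
  have hT : ∑ i ∈ Finset.range 3,
        (((4 * i : ℝ) - 3 * n - 1) ^ 2 * A i - 16 * (if Even i then A i else 0))
      ≤ ∑ i ∈ Finset.range (n + 1),
        (((4 * i : ℝ) - 3 * n - 1) ^ 2 * A i - 16 * (if Even i then A i else 0)) :=
    Finset.sum_le_sum_of_subset_of_nonneg hsub fun i hi _ => hg i hi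
  have hT3 : ∑ i ∈ Finset.range 3,
        (((4 * i : ℝ) - 3 * n - 1) ^ 2 * A i - 16 * (if Even i then A i else 0))
      = ((3 * (n:ℝ) + 1) ^ 2 - 16) + (3 * (n:ℝ) - 3) ^ 2 * A 1
        + ((3 * (n:ℝ) - 7) ^ 2 - 16) * A 2 := by
    rw [Finset.sum_range_succ, Finset.sum_range_succ, Finset.sum_range_one]
    norm_num [hA0]
    ring
  have hsplit : ∑ i ∈ Finset.range (n + 1),
        (((4 * i : ℝ) - 3 * n - 1) ^ 2 * A i - 16 * (if Even i then A i else 0))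
      = (∑ i ∈ Finset.range (n + 1), ((4 * i : ℝ) - 3 * n - 1) ^ 2 * A i)
        - 16 * ∑ i ∈ Finset.range (n + 1), (if Even i then A i else 0) := by
    rw [Finset.sum_sub_distrib, Finset.mul_sum]
  have h2s1 : (2:ℝ) * 2 ^ (s - 1) = 2 ^ s := by
    have hss : s - 1 + 1 = s := by omega
    calc (2:ℝ) * 2 ^ (s - 1) = 2 ^ (s - 1 + 1) := by ring
    _ = 2 ^ s := by rw [hss]
  have hgt : (2:ℝ) ^ s > 3 * n + 5 := by
    by_contra hP
    push_neg at hP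
    have hq1 : 4 * (2:ℝ) ^ s ≤ (3 * (n:ℝ) - 3) ^ 2 := by
      nlinarith [sq_nonneg ((n:ℝ) - 9)]
    have hq2 : 2 * (2:ℝ) ^ s + 16 ≤ (3 * (n:ℝ) - 7) ^ 2 := by
      nlinarith [sq_nonneg ((n:ℝ) - 9)]
    have p1 : 0 ≤ A 1 * ((3 * (n:ℝ) - 3) ^ 2 - 4 * 2 ^ s) := mul_nonneg hA1n (by linarith)
    have p2 : 0 ≤ A 2 * ((3 * (n:ℝ) - 7) ^ 2 - 16 - 2 * 2 ^ s) := mul_nonneg hA2n (by linarith)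
    have p3 : (2:ℝ) ^ s * (3 * n - 7) ≤ (3 * n + 5) * (3 * n - 7) :=
      mul_le_mul_of_nonneg_right hP (by linarith)
    have hb : ((3 * (n:ℝ) + 1) ^ 2 - 16) + (3 * (n:ℝ) - 3) ^ 2 * A 1
        + ((3 * (n:ℝ) - 7) ^ 2 - 16) * A 2 + 8 * (2:ℝ) ^ s
        ≤ (3 * (n:ℝ) + 1) * (2:ℝ) ^ s + 4 * ((2:ℝ) ^ s * A 1) + 2 * ((2:ℝ) ^ s * A 2) := by
      rw [hsplit] at hT
      rw [hT3] at hT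
      rw [hS] at hT
      linarith
    nlinarith [hb, p1, p2, p3, hn9R]
  refine ⟨hgt, ?_⟩
  have hnat : 3 * n + 5 = 2 ^ (2 * m + 3) := by
    have h8 : (2:ℕ) ^ (2 * m + 3) = 8 * 4 ^ m := by
      rw [pow_add, pow_mul]; ring
    omega
  have h2pow : (3 * (n:ℝ) + 5) = 2 ^ (2 * m + 3) := by exact_mod_cast hnat
  have hlt' : (2:ℝ) ^ (2 * m + 3) < 2 ^ s := by rw [← h2pow]; exact hgt
  have hlt : 2 * m + 3 < s :=
    (pow_lt_pow_iff_right₀ (by norm_num : (1:ℝ) < 2)).mp hlt'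
  omega
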